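/- Strong PJR implies proportionality: if an outcome o provides strong proportional justified representation, then for every agent i, u_i(o) ≥ ⌊μ_i/n⌋. -/
import Mathlib


/-- The utility of agent `i` under outcome `o`. -/
noncomputable def util {P : Type*} {n ℓ : ℕ}
    (S : Fin n → Fin ℓ → Finset P) (i : Fin n) (o : Fin ℓ → P) : ℕ :=
  Nat.card {t : Fin ℓ // o t ∈ S i t}

/-- `μ_i`: the number of timesteps at which agent `i` approves at least one project. -/
noncomputable def mu {P : Type*} {n ℓ : ℕ}
    (S : Fin n → Fin ℓ → Finset P) (i : Fin n) : ℕ :=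
  Nat.card {t : Fin ℓ // S i t ≠ ∅}

/-- Strong PJR implies proportionality: if outcome `o` provides strong
proportional justified representation — for all `s` and `k ≥ 1` and every group
`N*` with `|N*| ≥ s·n/k` (over ℚ) that agrees in `k` timesteps, there are `s`
timesteps at which the selected project is approved by some member of `N*` —
then `u_i(o) ≥ ⌊μ_i/n⌋` for every agent `i`. -/
theorem strongPJR_implies_prop {P : Type*} {n ℓ : ℕ} (hn : 1 ≤ n)
    (S : Fin n → Fin ℓ → Finset P) (o : Fin ℓ → P)
    (hPJR : ∀ (s k : ℕ), 0 < k → ∀ Nstar : Finset (Fin n),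
      ((s : ℚ) * n) / (k : ℚ) ≤ (Nstar.card : ℚ) →
      (∃ T' : Finset (Fin ℓ), T'.card = k ∧
        ∀ t ∈ T', ∃ p : P, ∀ i ∈ Nstar, p ∈ S i t) →
      ∃ Tstar : Finset (Fin ℓ), Tstar.card = s ∧
        ∀ t ∈ Tstar, ∃ i ∈ Nstar, o t ∈ S i t) :
    ∀ i : Fin n, mu S i / n ≤ util S i o := by
  intro i
  classical
  set μ := mu S i with hμ
  rcases Nat.eq_zero_or_pos μ with h0 | hpos
  · simp [h0]
  · have hcard : (Finset.univ.filter (fun t => S i t ≠ ∅)).card = μ := by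
      rw [hμ, mu, Nat.card_eq_fintype_card, Fintype.card_subtype]
    obtain ⟨Tstar, hTcard, hT⟩ := hPJR (μ / n) μ hpos {i}
      (by
        simp only [Finset.card_singleton, Nat.cast_one]
        rw [div_le_one (by exact_mod_cast hpos)]
        have : (μ / n) * n ≤ μ := Nat.div_mul_le_self μ n
        exact_mod_cast this)
      ⟨Finset.univ.filter (fun t => S i t ≠ ∅), hcard, by
        intro t ht
        simp only [Finset.mem_filter] at ht
        obtain ⟨p, hp⟩ := Finset.nonempty_iff_ne_empty.2 ht.2
        exact ⟨p, by simpa using hp⟩⟩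
    have hsub : Tstar ⊆ Finset.univ.filter (fun t => o t ∈ S i t) := by
      intro t ht
      obtain ⟨j, hj, hjt⟩ := hT t ht
      simp only [Finset.mem_singleton] at hj
      subst hj
      simp [hjt]
    calc μ / n = Tstar.card := hTcard.symm
      _ ≤ (Finset.univ.filter (fun t => o t ∈ S i t)).card := Finset.card_le_card hsub
      _ = util S i o := by rw [util, Nat.card_eq_fintype_card, Fintype.card_subtype]
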